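/- For every natural number t, the odd-index Fibonacci number f(4t+1) equals u t 0 plus the sum over all even s with 2 ≤ s ≤ 2t of (2^s · u t s + 2^(s-1) · u t (-s)). -/

import Mathlib

/-- One step of the recursion defining `u`: given `u t`, first the values at odd
positions are computed from `u t`, then the values at even positions are computed from
`u t` and the new odd values. -/
def ustep (v : ℤ → ℤ) : ℤ → ℤ := fun s =>
  let w : ℤ → ℤ := fun s' =>
    if s' < 0 then 2 * v (s' - 1) - v s' + v (s' + 1)
    else v (s' - 1) - v s' + 2 * v (s' + 1)
  if s % 2 = 0 then
    if s < 0 then 2 * w (s - 1) - v s + w (s + 1)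
    else w (s - 1) - v s + 2 * w (s + 1)
  else w s

/-- The doubly infinite sequences `u t : ℤ → ℤ`: `u 0` is the indicator function of
`{0, -1}`, and `u (t+1)` is obtained from `u t` by the two-step reflection rule. -/
def u : ℕ → ℤ → ℤ
  | 0 => fun s => if s = 0 ∨ s = -1 then 1 else 0
  | t + 1 => ustep (u t)

/-! ### Auxiliary machinery -/

def wodd (v : ℤ → ℤ) (s : ℤ) : ℤ :=
  if s < 0 then 2 * v (s - 1) - v s + v (s + 1)
  else v (s - 1) - v s + 2 * v (s + 1)

lemma ustep_eq (v : ℤ → ℤ) (s : ℤ) :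
    ustep v s =
      if s % 2 = 0 then
        if s < 0 then 2 * wodd v (s - 1) - v s + wodd v (s + 1)
        else wodd v (s - 1) - v s + 2 * wodd v (s + 1)
      else wodd v s := rfl

lemma u_succ (t : ℕ) : u (t + 1) = ustep (u t) := rfl

/-- Weight function: `2^s` for `s ≥ 0`, `2^(-s-1)` for `s < 0`. -/
def W (s : ℤ) : ℤ := 2 ^ (if 0 ≤ s then s.toNat else (-s - 1).toNat)

def Wev (s : ℤ) : ℤ := if Even s then W s else 0
def Wod (s : ℤ) : ℤ := if Even s then 0 else W s

lemma Wp (s : ℤ) (h : 0 ≤ s) : W s = 2 ^ s.toNat := by simp [W, h]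
lemma Wn (s : ℤ) (h : s < 0) : W s = 2 ^ (-s - 1).toNat := by simp [W, not_le.mpr h]

/-- Vanishing of `u t` outside `[-(2t+1), 2t+1]`. -/
lemma u_vanish : ∀ (t : ℕ) (s : ℤ), (2 * (t : ℤ) + 1 < s ∨ s < -(2 * (t : ℤ) + 1)) →
    u t s = 0 := by
  intro t
  induction t with
  | zero =>
    intro s hs
    have h1 : ¬(s = 0 ∨ s = -1) := by push_cast at hs; omega
    simp [u, h1]
  | succ t ih =>
    intro s hs
    push_cast at hs
    have h1 : u t (s - 1 - 1) = 0 := ih _ (by omega)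
    have h2 : u t (s - 1) = 0 := ih _ (by omega)
    have h3 : u t (s - 1 + 1) = 0 := ih _ (by omega)
    have h4 : u t s = 0 := ih _ (by omega)
    have h5 : u t (s + 1 - 1) = 0 := ih _ (by omega)
    have h6 : u t (s + 1) = 0 := ih _ (by omega)
    have h7 : u t (s + 1 + 1) = 0 := ih _ (by omega)
    rw [u_succ, ustep_eq]
    unfold wodd
    split_ifs <;> simp [h1, h2, h3, h4, h5, h6, h7]

/-! ### Expansion of `ustep` in the five sign/parity regimes -/

lemma ustep_even_pos (v : ℤ → ℤ) (s : ℤ) (hE : Even s) (hs : 2 ≤ s) :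
    ustep v s = v (s - 2) - v (s - 1) + 3 * v s - 2 * v (s + 1) + 4 * v (s + 2) := by
  rw [ustep_eq, if_pos (Int.even_iff.mp hE), if_neg (by omega)]
  unfold wodd
  rw [if_neg (by omega : ¬(s - 1 < 0)), if_neg (by omega : ¬(s + 1 < 0))]
  rw [show s - 1 - 1 = s - 2 by ring, show s - 1 + 1 = s by ring,
    show s + 1 - 1 = s by ring, show s + 1 + 1 = s + 2 by ring]
  ring

lemma ustep_even_zero (v : ℤ → ℤ) :
    ustep v 0 = 2 * v (-2) - v (-1) + 2 * v 0 - 2 * v 1 + 4 * v 2 := by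
  rw [ustep_eq]
  norm_num
  unfold wodd
  norm_num
  ring

lemma ustep_even_neg (v : ℤ → ℤ) (s : ℤ) (hE : Even s) (hs : s ≤ -2) :
    ustep v s = 4 * v (s - 2) - 2 * v (s - 1) + 3 * v s - v (s + 1) + v (s + 2) := by
  rw [ustep_eq, if_pos (Int.even_iff.mp hE), if_pos (by omega)]
  unfold wodd
  rw [if_pos (by omega : s - 1 < 0), if_pos (by omega : s + 1 < 0)]
  rw [show s - 1 - 1 = s - 2 by ring, show s - 1 + 1 = s by ring,
    show s + 1 - 1 = s by ring, show s + 1 + 1 = s + 2 by ring]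
  ring

lemma ustep_odd_pos (v : ℤ → ℤ) (s : ℤ) (hE : ¬Even s) (hs : 1 ≤ s) :
    ustep v s = v (s - 1) - v s + 2 * v (s + 1) := by
  rw [ustep_eq, if_neg (by rwa [← Int.even_iff])]
  unfold wodd
  rw [if_neg (by omega)]

lemma ustep_odd_neg (v : ℤ → ℤ) (s : ℤ) (hE : ¬Even s) (hs : s ≤ -1) :
    ustep v s = 2 * v (s - 1) - v s + v (s + 1) := by
  rw [ustep_eq, if_neg (by rwa [← Int.even_iff])]
  unfold wodd
  rw [if_pos (by omega)]

/-! ### Local coefficient functions -/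

def c2 (s : ℤ) : ℤ := if Even s then (if 0 ≤ s then 4 * W s else W s) else 0
def c1 (s : ℤ) : ℤ := if Even s then (if 0 ≤ s then -2 * W s else -W s) else 0
def c0 (s : ℤ) : ℤ := if Even s then (if s = 0 then 2 else 3 * W s) else 0
def cm1 (s : ℤ) : ℤ := if Even s then (if 0 ≤ s then -W s else -2 * W s) else 0
def cm2 (s : ℤ) : ℤ :=
  if Even s then (if s = 0 then 2 else if 0 < s then W s else 4 * W s) else 0
def d1 (s : ℤ) : ℤ := if Even s then 0 else if 0 ≤ s then 2 * W s else W s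
def d0 (s : ℤ) : ℤ := if Even s then 0 else -W s
def dm1 (s : ℤ) : ℤ := if Even s then 0 else if 0 ≤ s then W s else 2 * W s

lemma expand_ev (v : ℤ → ℤ) (s : ℤ) :
    Wev s * ustep v s =
      cm2 s * v (s - 2) + cm1 s * v (s - 1) + c0 s * v s + c1 s * v (s + 1)
        + c2 s * v (s + 2) := by
  by_cases hE : Even s
  · rcases show 2 ≤ s ∨ s = 0 ∨ s ≤ -2 by
        obtain ⟨k, hk⟩ := hE; omega with hs | hs | hs
    · rw [ustep_even_pos v s hE hs]
      simp only [Wev, c2, c1, c0, cm1, cm2, if_pos hE, if_pos (by omega : (0:ℤ) ≤ s),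
        if_neg (by omega : ¬s = 0), if_pos (by omega : (0:ℤ) < s)]
      ring
    · subst hs
      rw [ustep_even_zero v]
      rw [show (0:ℤ) - 2 = -2 by norm_num, show (0:ℤ) - 1 = -1 by norm_num,
        show (0:ℤ) + 1 = 1 by norm_num, show (0:ℤ) + 2 = 2 by norm_num,
        show Wev 0 = 1 by decide, show cm2 0 = 2 by decide, show cm1 0 = -1 by decide,
        show c0 0 = 2 by decide, show c1 0 = -2 by decide, show c2 0 = 4 by decide]
      ring
    · rw [ustep_even_neg v s hE hs]
      simp only [Wev, c2, c1, c0, cm1, cm2, if_pos hE, if_neg (by omega : ¬(0:ℤ) ≤ s),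
        if_neg (by omega : ¬s = 0), if_neg (by omega : ¬(0:ℤ) < s)]
      ring
  · simp [Wev, c2, c1, c0, cm1, cm2, hE]

lemma expand_od (v : ℤ → ℤ) (s : ℤ) :
    Wod s * ustep v s = dm1 s * v (s - 1) + d0 s * v s + d1 s * v (s + 1) := by
  by_cases hE : Even s
  · simp [Wod, d1, d0, dm1, hE]
  · rcases show 1 ≤ s ∨ s ≤ -1 by obtain ⟨k, hk⟩ := Int.not_even_iff_odd.mp hE; omega
      with hs | hs
    · rw [ustep_odd_pos v s hE hs]
      simp only [Wod, d1, d0, dm1, if_neg hE, if_pos (by omega : (0:ℤ) ≤ s)]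
      ring
    · rw [ustep_odd_neg v s hE hs]
      simp only [Wod, d1, d0, dm1, if_neg hE, if_neg (by omega : ¬(0:ℤ) ≤ s)]
      ring

/-! ### The key coefficient identities -/

lemma my_even_add_two {r : ℤ} : Even (r + 2) ↔ Even r := by
  constructor
  · intro ⟨k, hk⟩; exact ⟨k - 1, by omega⟩
  · intro ⟨k, hk⟩; exact ⟨k + 1, by omega⟩

lemma my_even_sub_two {r : ℤ} : Even (r - 2) ↔ Even r := by
  constructor
  · intro ⟨k, hk⟩; exact ⟨k + 1, by omega⟩
  · intro ⟨k, hk⟩; exact ⟨k - 1, by omega⟩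

lemma my_even_add_one {r : ℤ} : Even (r + 1) ↔ ¬Even r := by
  rw [Int.even_add_one]

lemma my_even_sub_one {r : ℤ} : Even (r - 1) ↔ ¬Even r := by
  constructor
  · intro h hr
    obtain ⟨k, hk⟩ := h; obtain ⟨m, hm⟩ := hr; omega
  · intro h
    rcases Int.even_or_odd r with h' | ⟨k, hk⟩
    · exact absurd h' h
    · exact ⟨k, by omega⟩

lemma Kev (r : ℤ) :
    cm2 (r + 2) + cm1 (r + 1) + c0 r + c1 (r - 1) + c2 (r - 2)
      = 8 * Wev r - 3 * Wod r := by
  by_cases hE : Even r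
  · have h2 : Even (r + 2) := my_even_add_two.mpr hE
    have hm2 : Even (r - 2) := my_even_sub_two.mpr hE
    have h1 : ¬Even (r + 1) := by simp [my_even_add_one, hE]
    have hm1 : ¬Even (r - 1) := by simp [my_even_sub_one, hE]
    simp only [cm2, cm1, c0, c1, c2, Wev, Wod, if_pos hE, if_pos h2, if_pos hm2,
      if_neg h1, if_neg hm1]
    rcases show 2 ≤ r ∨ r = 0 ∨ r = -2 ∨ r ≤ -4 by obtain ⟨k, hk⟩ := hE; omega
      with hr | hr | hr | hr
    · rw [if_neg (by omega : ¬r + 2 = 0), if_pos (by omega : (0:ℤ) < r + 2),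
        if_neg (by omega : ¬r = 0), if_pos (by omega : (0:ℤ) ≤ r - 2)]
      rw [Wp _ (by omega), Wp _ (by omega), Wp _ (by omega),
        show (r + 2).toNat = (r - 2).toNat + 4 by omega,
        show r.toNat = (r - 2).toNat + 2 by omega]
      ring
    · subst hr; decide
    · subst hr; decide
    · rw [if_neg (by omega : ¬r + 2 = 0), if_neg (by omega : ¬(0:ℤ) < r + 2),
        if_neg (by omega : ¬r = 0), if_neg (by omega : ¬(0:ℤ) ≤ r - 2)]
      rw [Wn _ (by omega), Wn _ (by omega), Wn _ (by omega),
        show (-(r - 2) - 1).toNat = (-(r + 2) - 1).toNat + 4 by omega,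
        show (-r - 1).toNat = (-(r + 2) - 1).toNat + 2 by omega]
      ring
  · have h2 : ¬Even (r + 2) := by simp [my_even_add_two, hE]
    have hm2 : ¬Even (r - 2) := by simp [my_even_sub_two, hE]
    have h1 : Even (r + 1) := my_even_add_one.mpr hE
    have hm1 : Even (r - 1) := my_even_sub_one.mpr hE
    simp only [cm2, cm1, c0, c1, c2, Wev, Wod, if_pos hE, if_neg h2, if_neg hm2,
      if_pos h1, if_pos hm1, if_neg hE]
    rcases show 1 ≤ r ∨ r = -1 ∨ r ≤ -3 by
        obtain ⟨k, hk⟩ := Int.not_even_iff_odd.mp hE; omega with hr | hr | hr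
    · rw [if_pos (by omega : (0:ℤ) ≤ r + 1), if_pos (by omega : (0:ℤ) ≤ r - 1)]
      rw [Wp _ (by omega), Wp _ (by omega), Wp _ (by omega),
        show (r + 1).toNat = (r - 1).toNat + 2 by omega,
        show r.toNat = (r - 1).toNat + 1 by omega]
      ring
    · subst hr; decide
    · rw [if_neg (by omega : ¬(0:ℤ) ≤ r + 1), if_neg (by omega : ¬(0:ℤ) ≤ r - 1)]
      rw [Wn _ (by omega), Wn _ (by omega), Wn _ (by omega),
        show (-(r - 1) - 1).toNat = (-(r + 1) - 1).toNat + 2 by omega,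
        show (-r - 1).toNat = (-(r + 1) - 1).toNat + 1 by omega]
      ring

lemma Kod (r : ℤ) :
    dm1 (r + 1) + d0 r + d1 (r - 1) = 3 * Wev r - Wod r := by
  by_cases hE : Even r
  · have h1 : ¬Even (r + 1) := by simp [my_even_add_one, hE]
    have hm1 : ¬Even (r - 1) := by simp [my_even_sub_one, hE]
    simp only [dm1, d0, d1, Wev, Wod, if_pos hE, if_neg h1, if_neg hm1]
    rcases show 2 ≤ r ∨ r = 0 ∨ r ≤ -2 by obtain ⟨k, hk⟩ := hE; omega
      with hr | hr | hr
    · rw [if_pos (by omega : (0:ℤ) ≤ r + 1), if_pos (by omega : (0:ℤ) ≤ r - 1)]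
      rw [Wp _ (by omega), Wp _ (by omega), Wp _ (by omega),
        show (r + 1).toNat = (r - 1).toNat + 2 by omega,
        show r.toNat = (r - 1).toNat + 1 by omega]
      ring
    · subst hr; decide
    · rw [if_neg (by omega : ¬(0:ℤ) ≤ r + 1), if_neg (by omega : ¬(0:ℤ) ≤ r - 1)]
      rw [Wn _ (by omega), Wn _ (by omega), Wn _ (by omega),
        show (-(r - 1) - 1).toNat = (-(r + 1) - 1).toNat + 2 by omega,
        show (-r - 1).toNat = (-(r + 1) - 1).toNat + 1 by omega]
      ring
  · have h1 : Even (r + 1) := my_even_add_one.mpr hE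
    have hm1 : Even (r - 1) := my_even_sub_one.mpr hE
    simp only [dm1, d0, d1, Wev, Wod, if_pos h1, if_pos hm1, if_neg hE]
    ring

/-! ### Window sums -/

lemma sum_shift (F : ℤ → ℤ) (k a b : ℤ) :
    ∑ s ∈ Finset.Icc a b, F (s + k) = ∑ s ∈ Finset.Icc (a + k) (b + k), F s := by
  rw [← Finset.map_add_right_Icc, Finset.sum_map]
  rfl

lemma sum_window (g v : ℤ → ℤ) (n a b : ℤ)
    (hv : ∀ s, n < s ∨ s < -n → v s = 0) (ha : a ≤ -n) (hb : n ≤ b) :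
    ∑ s ∈ Finset.Icc a b, g s * v s = ∑ s ∈ Finset.Icc (-n) n, g s * v s := by
  refine (Finset.sum_subset (Finset.Icc_subset_Icc ha hb) ?_).symm
  intro x hx hnx
  simp only [Finset.mem_Icc] at hx hnx
  rw [hv x (by omega), mul_zero]

/-- The even-weighted total. -/
noncomputable def Az (t : ℕ) : ℤ :=
  ∑ s ∈ Finset.Icc (-(2 * (t : ℤ) + 4)) (2 * (t : ℤ) + 4), Wev s * u t s

/-- The odd-weighted total. -/
noncomputable def Bz (t : ℕ) : ℤ :=
  ∑ s ∈ Finset.Icc (-(2 * (t : ℤ) + 4)) (2 * (t : ℤ) + 4), Wod s * u t s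

lemma shifted_sum (c : ℤ → ℤ) (v : ℤ → ℤ) (k M n : ℤ)
    (hv : ∀ s, n < s ∨ s < -n → v s = 0)
    (hM : n + 2 ≤ M) (hk : -2 ≤ k) (hk' : k ≤ 2) :
    ∑ s ∈ Finset.Icc (-M) M, c s * v (s + k)
      = ∑ r ∈ Finset.Icc (-n) n, c (r - k) * v r := by
  calc
    ∑ s ∈ Finset.Icc (-M) M, c s * v (s + k)
      = ∑ s ∈ Finset.Icc (-M) M, c (s + k - k) * v (s + k) :=
        Finset.sum_congr rfl fun s _ => by rw [add_sub_cancel_right]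
    _ = ∑ s ∈ Finset.Icc (-M + k) (M + k), c (s - k) * v s :=
        sum_shift (fun r => c (r - k) * v r) k (-M) M
    _ = ∑ r ∈ Finset.Icc (-n) n, c (r - k) * v r :=
        sum_window (fun r => c (r - k)) v n _ _ hv (by omega) (by omega)

lemma Az_step (t : ℕ) : Az (t + 1) = 8 * Az t - 3 * Bz t := by
  have hv : ∀ s : ℤ, 2 * (t : ℤ) + 1 < s ∨ s < -(2 * (t : ℤ) + 1) → u t s = 0 :=
    fun s hs => u_vanish t s hs
  have hM : (2 * (t : ℤ) + 1) + 2 ≤ 2 * ((t : ℤ) + 1) + 4 := by omega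
  unfold Az Bz
  rw [u_succ, Nat.cast_add, Nat.cast_one]
  calc
    ∑ s ∈ Finset.Icc (-(2 * ((t : ℤ) + 1) + 4)) (2 * ((t : ℤ) + 1) + 4),
        Wev s * ustep (u t) s
      = ∑ s ∈ Finset.Icc (-(2 * ((t : ℤ) + 1) + 4)) (2 * ((t : ℤ) + 1) + 4),
          (cm2 s * u t (s + -2) + cm1 s * u t (s + -1) + c0 s * u t (s + 0)
            + c1 s * u t (s + 1) + c2 s * u t (s + 2)) := by
        refine Finset.sum_congr rfl fun s _ => ?_
        rw [expand_ev]
        rw [show s + -2 = s - 2 by ring, show s + -1 = s - 1 by ring,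
          show s + 0 = s by ring]
    _ = ∑ r ∈ Finset.Icc (-(2 * (t : ℤ) + 1)) (2 * (t : ℤ) + 1),
          (cm2 (r - -2) + cm1 (r - -1) + c0 (r - 0) + c1 (r - 1) + c2 (r - 2)) * u t r := by
        rw [Finset.sum_add_distrib, Finset.sum_add_distrib, Finset.sum_add_distrib,
          Finset.sum_add_distrib]
        rw [shifted_sum cm2 (u t) (-2) _ _ hv hM (by omega) (by omega),
          shifted_sum cm1 (u t) (-1) _ _ hv hM (by omega) (by omega),
          shifted_sum c0 (u t) 0 _ _ hv hM (by omega) (by omega),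
          shifted_sum c1 (u t) 1 _ _ hv hM (by omega) (by omega),
          shifted_sum c2 (u t) 2 _ _ hv hM (by omega) (by omega)]
        rw [← Finset.sum_add_distrib, ← Finset.sum_add_distrib,
          ← Finset.sum_add_distrib, ← Finset.sum_add_distrib]
        exact Finset.sum_congr rfl fun r _ => by ring
    _ = ∑ r ∈ Finset.Icc (-(2 * (t : ℤ) + 1)) (2 * (t : ℤ) + 1),
          (8 * Wev r - 3 * Wod r) * u t r := by
        refine Finset.sum_congr rfl fun r _ => ?_
        rw [show r - -2 = r + 2 by ring, show r - -1 = r + 1 by ring,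
          show r - 0 = r by ring, Kev]
    _ = 8 * (∑ s ∈ Finset.Icc (-(2 * (t : ℤ) + 4)) (2 * (t : ℤ) + 4), Wev s * u t s)
          - 3 * (∑ s ∈ Finset.Icc (-(2 * (t : ℤ) + 4)) (2 * (t : ℤ) + 4), Wod s * u t s) := by
        rw [sum_window Wev (u t) (2 * (t : ℤ) + 1) _ _ hv (by omega) (by omega),
          sum_window Wod (u t) (2 * (t : ℤ) + 1) _ _ hv (by omega) (by omega)]
        rw [Finset.mul_sum, Finset.mul_sum, ← Finset.sum_sub_distrib]
        exact Finset.sum_congr rfl fun r _ => by ring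

lemma Bz_step (t : ℕ) : Bz (t + 1) = 3 * Az t - Bz t := by
  have hv : ∀ s : ℤ, 2 * (t : ℤ) + 1 < s ∨ s < -(2 * (t : ℤ) + 1) → u t s = 0 :=
    fun s hs => u_vanish t s hs
  have hM : (2 * (t : ℤ) + 1) + 2 ≤ 2 * ((t : ℤ) + 1) + 4 := by omega
  unfold Az Bz
  rw [u_succ, Nat.cast_add, Nat.cast_one]
  calc
    ∑ s ∈ Finset.Icc (-(2 * ((t : ℤ) + 1) + 4)) (2 * ((t : ℤ) + 1) + 4),
        Wod s * ustep (u t) s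
      = ∑ s ∈ Finset.Icc (-(2 * ((t : ℤ) + 1) + 4)) (2 * ((t : ℤ) + 1) + 4),
          (dm1 s * u t (s + -1) + d0 s * u t (s + 0) + d1 s * u t (s + 1)) := by
        refine Finset.sum_congr rfl fun s _ => ?_
        rw [expand_od]
        rw [show s + -1 = s - 1 by ring, show s + 0 = s by ring]
    _ = ∑ r ∈ Finset.Icc (-(2 * (t : ℤ) + 1)) (2 * (t : ℤ) + 1),
          (dm1 (r - -1) + d0 (r - 0) + d1 (r - 1)) * u t r := by
        rw [Finset.sum_add_distrib, Finset.sum_add_distrib]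
        rw [shifted_sum dm1 (u t) (-1) _ _ hv hM (by omega) (by omega),
          shifted_sum d0 (u t) 0 _ _ hv hM (by omega) (by omega),
          shifted_sum d1 (u t) 1 _ _ hv hM (by omega) (by omega)]
        rw [← Finset.sum_add_distrib, ← Finset.sum_add_distrib]
        exact Finset.sum_congr rfl fun r _ => by ring
    _ = ∑ r ∈ Finset.Icc (-(2 * (t : ℤ) + 1)) (2 * (t : ℤ) + 1),
          (3 * Wev r - Wod r) * u t r := by
        refine Finset.sum_congr rfl fun r _ => ?_
        rw [show r - -1 = r + 1 by ring, show r - 0 = r by ring, Kod]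
    _ = 3 * (∑ s ∈ Finset.Icc (-(2 * (t : ℤ) + 4)) (2 * (t : ℤ) + 4), Wev s * u t s)
          - (∑ s ∈ Finset.Icc (-(2 * (t : ℤ) + 4)) (2 * (t : ℤ) + 4), Wod s * u t s) := by
        rw [sum_window Wev (u t) (2 * (t : ℤ) + 1) _ _ hv (by omega) (by omega),
          sum_window Wod (u t) (2 * (t : ℤ) + 1) _ _ hv (by omega) (by omega)]
        rw [Finset.mul_sum, ← Finset.sum_sub_distrib]
        exact Finset.sum_congr rfl fun r _ => by ring

lemma Az_zero : Az 0 = 1 := by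
  have h : ∀ s : ℤ, 1 < s ∨ s < -1 → u 0 s = 0 := fun s hs =>
    u_vanish 0 s (by push_cast; omega)
  unfold Az
  rw [show (2 * ((0:ℕ) : ℤ) + 4) = 4 by norm_num,
    sum_window Wev (u 0) 1 _ _ h (by omega) (by omega)]
  decide

lemma Bz_zero : Bz 0 = 1 := by
  have h : ∀ s : ℤ, 1 < s ∨ s < -1 → u 0 s = 0 := fun s hs =>
    u_vanish 0 s (by push_cast; omega)
  unfold Bz
  rw [show (2 * ((0:ℕ) : ℤ) + 4) = 4 by norm_num,
    sum_window Wod (u 0) 1 _ _ h (by omega) (by omega)]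
  decide

/-! ### Fibonacci side -/

lemma fib_pair (f : ℤ → ℤ) (h0 : f 0 = 0) (h1 : f 1 = 1)
    (hrec : ∀ n : ℤ, f (n + 1) = f n + f (n - 1)) :
    ∀ t : ℕ, f (4 * (t : ℤ) + 1) = Az t ∧ f (4 * (t : ℤ) - 1) = Bz t := by
  intro t
  induction t with
  | zero =>
    have e := hrec 0
    rw [show (0:ℤ) + 1 = 1 by ring, show (0:ℤ) - 1 = -1 by ring, h0, h1] at e
    norm_num
    refine ⟨by rw [h1, Az_zero], ?_⟩
    rw [Bz_zero]
    linarith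
  | succ t ih =>
    obtain ⟨ha, hb⟩ := ih
    have e1 := hrec (4 * (t : ℤ))
    have e2 := hrec (4 * (t : ℤ) + 1)
    have e3 := hrec (4 * (t : ℤ) + 2)
    have e4 := hrec (4 * (t : ℤ) + 3)
    have e5 := hrec (4 * (t : ℤ) + 4)
    rw [show 4 * (t : ℤ) + 1 + 1 = 4 * (t : ℤ) + 2 by ring,
      show 4 * (t : ℤ) + 1 - 1 = 4 * (t : ℤ) by ring] at e2
    rw [show 4 * (t : ℤ) + 2 + 1 = 4 * (t : ℤ) + 3 by ring,
      show 4 * (t : ℤ) + 2 - 1 = 4 * (t : ℤ) + 1 by ring] at e3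
    rw [show 4 * (t : ℤ) + 3 + 1 = 4 * (t : ℤ) + 4 by ring,
      show 4 * (t : ℤ) + 3 - 1 = 4 * (t : ℤ) + 2 by ring] at e4
    rw [show 4 * (t : ℤ) + 4 + 1 = 4 * (t : ℤ) + 5 by ring,
      show 4 * (t : ℤ) + 4 - 1 = 4 * (t : ℤ) + 3 by ring] at e5
    have hA : Az (t + 1) = 8 * Az t - 3 * Bz t := Az_step t
    have hB : Bz (t + 1) = 3 * Az t - Bz t := Bz_step t
    constructor
    · rw [Nat.cast_add, Nat.cast_one,
        show 4 * ((t : ℤ) + 1) + 1 = 4 * (t : ℤ) + 5 by ring, hA]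
      linarith
    · rw [Nat.cast_add, Nat.cast_one,
        show 4 * ((t : ℤ) + 1) - 1 = 4 * (t : ℤ) + 3 by ring, hB]
      linarith

/-! ### Converting `Az` to the statement's sum -/

lemma natIcc_sum_cast (g : ℤ → ℤ) (a b : ℕ) :
    ∑ s ∈ Finset.Icc a b, g (s : ℤ) = ∑ s ∈ Finset.Icc (a : ℤ) (b : ℤ), g s := by
  refine Finset.sum_nbij' (fun n => (n : ℤ)) Int.toNat ?_ ?_ ?_ ?_ ?_ <;>
    intros <;> simp_all [Finset.mem_Icc] <;> omega

lemma int_Icc_eq_Ico (a b : ℤ) : Finset.Icc a b = Finset.Ico a (b + 1) := by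
  ext x
  simp only [Finset.mem_Icc, Finset.mem_Ico]
  omega

lemma Az_eq (t : ℕ) :
    Az t = u t 0 + ∑ s ∈ (Finset.Icc 2 (2 * t)).filter (fun s => Even s),
      (2 ^ s * u t (s : ℤ) + 2 ^ (s - 1) * u t (-(s : ℤ))) := by
  set M : ℤ := 2 * (t : ℤ) + 4 with hMdef
  have hM : (0 : ℤ) ≤ M := by positivity
  have hsplit : Az t = (∑ s ∈ Finset.Ico (-M) 0, Wev s * u t s)
      + ∑ s ∈ Finset.Ico (0 : ℤ) (M + 1), Wev s * u t s := by
    unfold Az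
    rw [int_Icc_eq_Ico,
      ← Finset.Ico_union_Ico_eq_Ico (by omega : -M ≤ (0 : ℤ)) (by omega : (0 : ℤ) ≤ M + 1),
      Finset.sum_union (Finset.Ico_disjoint_Ico_consecutive _ _ _)]
  have hcast : ∀ s : ℕ, ((2 * t : ℕ) : ℤ) = 2 * (t : ℤ) := by intro; push_cast; ring
  have hpos : ∑ s ∈ Finset.Ico (0 : ℤ) (M + 1), Wev s * u t s
      = u t 0 + ∑ s ∈ Finset.Icc 2 (2 * t),
          (if Even s then (2 : ℤ) ^ s * u t (s : ℤ) else 0) := by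
    rw [← Finset.Ico_union_Ico_eq_Ico (by omega : (0 : ℤ) ≤ 1) (by omega : (1 : ℤ) ≤ M + 1),
      Finset.sum_union (Finset.Ico_disjoint_Ico_consecutive _ _ _)]
    congr 1
    · rw [show Finset.Ico (0 : ℤ) 1 = {0} by ext x; simp [Finset.mem_Ico]; omega,
        Finset.sum_singleton, show Wev 0 = 1 by decide, one_mul]
    · have hsub : Finset.Icc (2 : ℤ) (2 * (t : ℤ)) ⊆ Finset.Ico 1 (M + 1) := by
        intro x hx
        simp only [Finset.mem_Icc, Finset.mem_Ico] at hx ⊢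
        omega
      have hvan : ∀ x ∈ Finset.Ico (1 : ℤ) (M + 1),
          x ∉ Finset.Icc (2 : ℤ) (2 * (t : ℤ)) → Wev x * u t x = 0 := by
        intro x hx hnx
        simp only [Finset.mem_Icc, Finset.mem_Ico] at hx hnx
        by_cases h : Even x
        · obtain ⟨k, hk⟩ := h
          rw [u_vanish t x (by omega), mul_zero]
        · rw [show Wev x = 0 by simp [Wev, h], zero_mul]
      rw [← Finset.sum_subset hsub hvan]
      have hc := natIcc_sum_cast (fun s => Wev s * u t s) 2 (2 * t)
      rw [hcast 0, show ((2 : ℕ) : ℤ) = 2 by norm_num] at hc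
      rw [← hc]
      refine Finset.sum_congr rfl fun s _ => ?_
      by_cases h : Even s
      · rw [if_pos h, show Wev (s : ℤ) = 2 ^ s by
          rw [Wev, if_pos ((Int.even_coe_nat s).mpr h), Wp _ (Int.natCast_nonneg s),
            Int.toNat_natCast]]
      · rw [if_neg h, show Wev (s : ℤ) = 0 by
          simp [Wev, h, Int.even_coe_nat], zero_mul]
  have hneg : ∑ s ∈ Finset.Ico (-M) (0 : ℤ), Wev s * u t s
      = ∑ s ∈ Finset.Icc 2 (2 * t),
          (if Even s then (2 : ℤ) ^ (s - 1) * u t (-(s : ℤ)) else 0) := by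
    have h1 : ∑ s ∈ Finset.Ico (-M) (0 : ℤ), Wev s * u t s
        = ∑ r ∈ Finset.Icc (1 : ℤ) M, Wev (-r) * u t (-r) := by
      refine Finset.sum_nbij' (fun s => -s) (fun r => -r) ?_ ?_ ?_ ?_ ?_
      · intro a ha
        simp only [Finset.mem_Ico, Finset.mem_Icc] at ha ⊢
        omega
      · intro a ha
        simp only [Finset.mem_Ico, Finset.mem_Icc] at ha ⊢
        omega
      · intro a _; ring
      · intro a _; ring
      · intro a _
        rw [neg_neg]
    rw [h1]
    have hsub : Finset.Icc (2 : ℤ) (2 * (t : ℤ)) ⊆ Finset.Icc 1 M := by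
      intro x hx
      simp only [Finset.mem_Icc] at hx ⊢
      omega
    have hvan : ∀ x ∈ Finset.Icc (1 : ℤ) M,
        x ∉ Finset.Icc (2 : ℤ) (2 * (t : ℤ)) → Wev (-x) * u t (-x) = 0 := by
      intro x hx hnx
      simp only [Finset.mem_Icc] at hx hnx
      by_cases h : Even x
      · obtain ⟨k, hk⟩ := h
        rw [u_vanish t (-x) (by omega), mul_zero]
      · rw [show Wev (-x) = 0 by simp [Wev, even_neg, h], zero_mul]
    rw [← Finset.sum_subset hsub hvan]
    have hc := natIcc_sum_cast (fun r => Wev (-r) * u t (-r)) 2 (2 * t)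
    rw [hcast 0, show ((2 : ℕ) : ℤ) = 2 by norm_num] at hc
    rw [← hc]
    refine Finset.sum_congr rfl fun s hs => ?_
    simp only [Finset.mem_Icc] at hs
    by_cases h : Even s
    · rw [if_pos h, show Wev (-(s : ℤ)) = 2 ^ (s - 1) by
        rw [Wev, if_pos (by simp [even_neg, Int.even_coe_nat, h]),
          Wn _ (by omega : -(s : ℤ) < 0), show (-(-(s:ℤ)) - 1).toNat = s - 1 by omega]]
    · rw [if_neg h, show Wev (-(s : ℤ)) = 0 by
        simp [Wev, even_neg, Int.even_coe_nat, h], zero_mul]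
  rw [hsplit, hpos, hneg, Finset.sum_filter]
  rw [show ∀ (A B C : ℤ), B + (A + C) = A + (C + B) from fun A B C => by ring]
  congr 1
  rw [← Finset.sum_add_distrib]
  refine Finset.sum_congr rfl fun s _ => ?_
  by_cases h : Even s <;> simp [h]

/-- The partition formula for the odd-index Fibonacci number `f (4t+1)`:
`f (4t+1) = u t 0 + Σ_{s even, 2 ≤ s ≤ 2t} (2^s · u t s + 2^(s-1) · u t (-s))`,
where `f` is the extended Fibonacci sequence. -/
theorem fib_partition_4t_add_one (f : ℤ → ℤ) (h0 : f 0 = 0) (h1 : f 1 = 1)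
    (hrec : ∀ n : ℤ, f (n + 1) = f n + f (n - 1)) (t : ℕ) :
    f (4 * (t : ℤ) + 1) =
      u t 0 + ∑ s ∈ (Finset.Icc 2 (2 * t)).filter (fun s => Even s),
        (2 ^ s * u t (s : ℤ) + 2 ^ (s - 1) * u t (-(s : ℤ))) := by
  rw [(fib_pair f h0 h1 hrec t).1, Az_eq]
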